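/- arXiv:2206.12184 — 2 statements merged into one kernel-verified Lean document; each statement's English description precedes it below -/
import Mathlib

section
/- Let X be a Poisson random variable with mean α/m. Then for every n≥0, E[(mX)_{n,λ}] = m^n φ_{n,λ/m}(α/m), i.e., e^{-α/m} Σ_{k=0}^∞ (mk)_{n,λ} (α/m)^k / k! = m^n φ_{n,λ/m}(α/m), where φ_{n,μ}(x) is the degenerate Bell polynomial. -/
open Finset

/-- Degenerate falling factorial `(x)_{n,λ} = x(x-λ)⋯(x-(n-1)λ)`. -/
noncomputable def dfall (lam x : ℝ) (n : ℕ) : ℝ := ∏ i ∈ Finset.range n, (x - i * lam)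

/-- Ordinary falling factorial `(x)_n = x(x-1)⋯(x-n+1)`. -/
noncomputable def ffall (x : ℝ) (n : ℕ) : ℝ := ∏ i ∈ Finset.range n, (x - i)

lemma real_exp_tsum (y : ℝ) : Real.exp y = ∑' k : ℕ, y ^ k / (Nat.factorial k) := by
  rw [Real.exp_eq_exp_ℝ, NormedSpace.exp_eq_tsum_div]

lemma sum_aux (p : ℕ) (C z : ℝ) (hC : 0 ≤ C) (hz : 0 ≤ z) :
    Summable (fun k : ℕ => ((k : ℝ) + C) ^ p * z ^ k / (Nat.factorial k)) := by
  have hM : ∀ k : ℕ, (2 * z) ^ k / (Nat.factorial k) ≤ Real.exp (2 * z) := by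
    intro k
    rw [real_exp_tsum (2 * z)]
    exact Summable.le_tsum (Real.summable_pow_div_factorial (2 * z)) k (fun j _ => by positivity)
  have h0 : Summable (fun k : ℕ => ((k : ℝ)) ^ p * (1 / 2 : ℝ) ^ k) :=
    summable_pow_mul_geometric_of_norm_lt_one p (by rw [Real.norm_eq_abs, abs_of_pos] <;> norm_num)
  have h1 := (summable_nat_add_iff 1).2 h0
  have hg : Summable (fun k : ℕ => ((k : ℝ) + 1) ^ p * (1 / 2 : ℝ) ^ k) := by
    refine (h1.mul_left 2).congr fun k => ?_
    push_cast [pow_succ]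
    ring
  refine Summable.of_nonneg_of_le (fun k => by positivity)
    (fun k => ?_) ((hg.mul_left ((1 + C) ^ p * Real.exp (2 * z))))
  have h2 : ((k : ℝ) + C) ^ p ≤ (1 + C) ^ p * ((k : ℝ) + 1) ^ p := by
    rw [← mul_pow]
    apply pow_le_pow_left₀ (by positivity)
    nlinarith [Nat.cast_nonneg (α := ℝ) k]
  have h3 : z ^ k / (Nat.factorial k) ≤ (1 / 2 : ℝ) ^ k * Real.exp (2 * z) := by
    have : z ^ k / (Nat.factorial k) = (1 / 2 : ℝ) ^ k * ((2 * z) ^ k / (Nat.factorial k)) := by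
      rw [mul_pow]
      field_simp
      rw [mul_assoc, ← mul_pow]; norm_num
    rw [this]
    exact mul_le_mul_of_nonneg_left (hM k) (by positivity)
  calc ((k : ℝ) + C) ^ p * z ^ k / (Nat.factorial k)
      = ((k : ℝ) + C) ^ p * (z ^ k / (Nat.factorial k)) := by ring
    _ ≤ ((1 + C) ^ p * ((k : ℝ) + 1) ^ p) * ((1 / 2 : ℝ) ^ k * Real.exp (2 * z)) := by
        apply mul_le_mul h2 h3 (by positivity) (by positivity)
    _ = (1 + C) ^ p * Real.exp (2 * z) * (((k : ℝ) + 1) ^ p * (1 / 2 : ℝ) ^ k) := by ring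

lemma dfall_zero (μ x : ℝ) : dfall μ x 0 = 1 := by simp [dfall]

lemma dfall_succ (μ x : ℝ) (n : ℕ) : dfall μ x (n + 1) = dfall μ x n * (x - n * μ) := by
  simp [dfall, Finset.prod_range_succ]

lemma dfall_abs_le (μ : ℝ) (k n : ℕ) : |dfall μ (k : ℝ) n| ≤ ((k : ℝ) + n * |μ|) ^ n := by
  unfold dfall
  rw [Finset.abs_prod]
  calc ∏ i ∈ Finset.range n, |(k : ℝ) - i * μ|
      ≤ ∏ _i ∈ Finset.range n, ((k : ℝ) + n * |μ|) := by
        apply Finset.prod_le_prod (fun i _ => abs_nonneg _)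
        intro i hi
        have hi' : (i : ℝ) ≤ n := by
          exact_mod_cast (Finset.mem_range.1 hi).le
        calc |(k : ℝ) - i * μ| ≤ |(k : ℝ)| + |(i : ℝ) * μ| := abs_sub _ _
          _ = (k : ℝ) + i * |μ| := by rw [abs_mul, Nat.abs_cast, Nat.abs_cast]
          _ ≤ (k : ℝ) + n * |μ| := by
              have := abs_nonneg μ
              nlinarith
    _ = ((k : ℝ) + n * |μ|) ^ n := by rw [Finset.prod_const, Finset.card_range]

noncomputable def hh (μ x : ℝ) (n k : ℕ) (t : ℝ) : ℝ :=
  x ^ k / (Nat.factorial k) * dfall μ (k : ℝ) n * (1 + μ * t) ^ ((k : ℝ) / μ - n)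

noncomputable def uu (μ x : ℝ) (n k : ℕ) : ℝ :=
  x ^ k / (Nat.factorial k) * ((k : ℝ) + n * |μ|) ^ n * (2 : ℝ) ^ ((k : ℝ) / |μ| + n)

lemma uu_summable (μ x : ℝ) (hμ : μ ≠ 0) (hx : 0 ≤ x) (n : ℕ) : Summable (uu μ x n) := by
  have hμ' : (0 : ℝ) < |μ| := abs_pos.2 hμ
  refine ((sum_aux n ((n : ℝ) * |μ|) (x * (2 : ℝ) ^ (1 / |μ|)) (by positivity)
    (by positivity)).mul_left ((2 : ℝ) ^ n)).congr fun k => ?_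
  have h2 : (2 : ℝ) ^ ((k : ℝ) / |μ| + n) = ((2 : ℝ) ^ (1 / |μ|)) ^ k * 2 ^ n := by
    rw [Real.rpow_add two_pos, Real.rpow_natCast]
    congr 1
    rw [← Real.rpow_natCast ((2 : ℝ) ^ (1 / |μ|)) k, ← Real.rpow_mul (by norm_num)]
    congr 1
    ring
  unfold uu
  rw [h2, mul_pow]
  ring

lemma hh_bound (μ x : ℝ) (hμ : μ ≠ 0) (hx : 0 ≤ x) (n k : ℕ) (t : ℝ)
    (hb1 : 1 / 2 ≤ 1 + μ * t) (hb2 : 1 + μ * t ≤ 2) :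
    |hh μ x n k t| ≤ uu μ x n k := by
  have hμ' : (0 : ℝ) < |μ| := abs_pos.2 hμ
  have hbpos : (0 : ℝ) < 1 + μ * t := by linarith
  set e : ℝ := (k : ℝ) / μ - n with he
  have habse : |e| ≤ (k : ℝ) / |μ| + n := by
    calc |e| ≤ |(k : ℝ) / μ| + |(n : ℝ)| := abs_sub _ _
      _ = (k : ℝ) / |μ| + n := by rw [abs_div, Nat.abs_cast, Nat.abs_cast]
  have hpow : (1 + μ * t) ^ e ≤ (2 : ℝ) ^ ((k : ℝ) / |μ| + n) := by
    have step1 : (1 + μ * t) ^ e ≤ (2 : ℝ) ^ |e| := by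
      rcases le_or_gt 0 e with hepos | heneg
      · rw [abs_of_nonneg hepos]
        exact Real.rpow_le_rpow hbpos.le hb2 hepos
      · rw [abs_of_neg heneg]
        calc (1 + μ * t) ^ e ≤ (1 / 2 : ℝ) ^ e :=
              Real.rpow_le_rpow_of_nonpos (by norm_num) hb1 heneg.le
          _ = (2 : ℝ) ^ (-e) := by
              rw [one_div, Real.inv_rpow (by norm_num), ← Real.rpow_neg (by norm_num)]
    exact step1.trans (Real.rpow_le_rpow_of_exponent_le one_le_two habse)
  have h1 : |hh μ x n k t| = |x| ^ k / (Nat.factorial k) * |dfall μ (k : ℝ) n|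
      * (1 + μ * t) ^ e := by
    unfold hh
    rw [abs_mul, abs_mul, abs_div, abs_pow, Nat.abs_cast,
      abs_of_pos (Real.rpow_pos_of_pos hbpos e)]
  rw [h1, abs_of_nonneg hx]
  unfold uu
  gcongr
  exact dfall_abs_le μ k n


lemma hh_hasDerivAt (μ x : ℝ) (hμ : μ ≠ 0) (n k : ℕ) (t : ℝ) (hbpos : 0 < 1 + μ * t) :
    HasDerivAt (hh μ x n k) (hh μ x (n + 1) k t) t := by
  have inner : HasDerivAt (fun t : ℝ => 1 + μ * t) μ t := by
    simpa using ((hasDerivAt_id t).const_mul μ).const_add 1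
  have hpow := inner.rpow_const (p := (k : ℝ) / μ - n) (Or.inl hbpos.ne')
  have := hpow.const_mul (x ^ k / (Nat.factorial k) * dfall μ (k : ℝ) n)
  convert this using 1
  · rfl
  · rfl
  · rfl
  unfold hh
  rw [dfall_succ]
  have he : (k : ℝ) / μ - ((n + 1 : ℕ) : ℝ) = ((k : ℝ) / μ - n) - 1 := by push_cast; ring
  have hμe : μ * ((k : ℝ) / μ - n) = (k : ℝ) - n * μ := by field_simp
  rw [he]
  rw [← hμe]
  ring

lemma key (μ x : ℝ) (hμ : μ ≠ 0) (hx : 0 < x) (n : ℕ) :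
    iteratedDeriv n (fun t : ℝ => Real.exp (x * ((1 + μ * t) ^ (1 / μ) - 1))) 0
      = Real.exp (-x) * ∑' k : ℕ, dfall μ (k : ℝ) n * x ^ k / (Nat.factorial k) := by
  have hμ' : (0 : ℝ) < |μ| := abs_pos.2 hμ
  set r : ℝ := 1 / (2 * |μ|) with hr
  have hr0 : 0 < r := by positivity
  set s : Set ℝ := Set.Ioo (-r) r with hs
  have hs_open : IsOpen s := isOpen_Ioo
  have hs_conn : IsPreconnected s := isPreconnected_Ioo
  have h0s : (0 : ℝ) ∈ s := by constructor <;> simpa using hr0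
  have hmem : ∀ t ∈ s, 1 / 2 ≤ 1 + μ * t ∧ 1 + μ * t ≤ 2 := by
    intro t ht
    have h1 : |μ * t| ≤ 1 / 2 := by
      rw [abs_mul]
      have ht' : |t| ≤ r := by
        rw [abs_le]
        exact ⟨ht.1.le, ht.2.le⟩
      calc |μ| * |t| ≤ |μ| * r := by nlinarith [abs_nonneg t]
        _ = 1 / 2 := by rw [hr]; field_simp
    rw [abs_le] at h1
    constructor <;> linarith [h1.1, h1.2]
  have hbound : ∀ (n k : ℕ), ∀ t ∈ s, |hh μ x n k t| ≤ uu μ x n k := fun n k t ht =>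
    hh_bound μ x hμ hx.le n k t (hmem t ht).1 (hmem t ht).2
  have hsum0 : ∀ n : ℕ, Summable (fun k => hh μ x n k 0) := fun n =>
    Summable.of_norm_bounded (uu_summable μ x hμ hx.le n)
      (fun k => by rw [Real.norm_eq_abs]; exact hbound n k 0 h0s)
  have main : ∀ n : ℕ, ∀ t ∈ s,
      iteratedDeriv n (fun t : ℝ => Real.exp (x * ((1 + μ * t) ^ (1 / μ) - 1))) t
        = Real.exp (-x) * ∑' k : ℕ, hh μ x n k t := by
    intro n
    induction n with
    | zero =>
      intro t ht
      have hbpos : (0 : ℝ) < 1 + μ * t := by linarith [(hmem t ht).1]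
      rw [iteratedDeriv_zero]
      have : x * ((1 + μ * t) ^ (1 / μ) - 1) = -x + x * (1 + μ * t) ^ (1 / μ) := by ring
      rw [this, Real.exp_add]
      congr 1
      rw [real_exp_tsum]
      apply tsum_congr
      intro k
      unfold hh
      rw [dfall_zero, mul_pow, ← Real.rpow_natCast ((1 + μ * t) ^ (1 / μ)) k,
        ← Real.rpow_mul hbpos.le]
      rw [show 1 / μ * (k : ℝ) = (k : ℝ) / μ - ((0 : ℕ) : ℝ) by push_cast; ring]
      ring
    | succ n IH =>
      intro t ht
      rw [iteratedDeriv_succ]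
      have heq : iteratedDeriv n (fun t : ℝ => Real.exp (x * ((1 + μ * t) ^ (1 / μ) - 1)))
          =ᶠ[nhds t] (fun t => Real.exp (-x) * ∑' k : ℕ, hh μ x n k t) := by
        filter_upwards [hs_open.mem_nhds ht] with y hy using IH y hy
      rw [heq.deriv_eq]
      have hd : HasDerivAt (fun t : ℝ => ∑' k : ℕ, hh μ x n k t)
          (∑' k : ℕ, hh μ x (n + 1) k t) t := by
        apply hasDerivAt_tsum_of_isPreconnected (uu_summable μ x hμ hx.le (n + 1))
          hs_open hs_conn
          (fun k y hy => hh_hasDerivAt μ x hμ n k y (by linarith [(hmem y hy).1]))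
          (fun k y hy => by rw [Real.norm_eq_abs]; exact hbound (n + 1) k y hy)
          h0s (hsum0 n) ht
      rw [(hd.const_mul (Real.exp (-x))).deriv]
  have := main n 0 h0s
  rw [this]
  congr 1
  apply tsum_congr
  intro k
  unfold hh
  rw [mul_zero, add_zero, Real.one_rpow]
  ring

theorem stmt2 (m : ℕ) (hm : 0 < m) (α lam : ℝ) (hα : 0 < α) (hlam : lam ≠ 0)
    (phi : ℕ → ℝ)
    (hphi : ∀ n : ℕ, iteratedDeriv n
        (fun t : ℝ => Real.exp ((α / m) * ((1 + (lam / m) * t) ^ ((m : ℝ) / lam) - 1))) 0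
      = phi n) :
    ∀ n : ℕ,
      Real.exp (-(α / m)) *
        ∑' k : ℕ, dfall lam ((m : ℝ) * k) n * (α / m) ^ k / (Nat.factorial k)
      = (m : ℝ) ^ n * phi n := by
  intro n
  have hm0 : (m : ℝ) ≠ 0 := Nat.cast_ne_zero.2 hm.ne'
  have hx : 0 < α / m := div_pos hα (by exact_mod_cast hm)
  have hμ : lam / m ≠ 0 := div_ne_zero hlam hm0
  have hk := key (lam / m) (α / m) hμ hx n
  rw [show (1 : ℝ) / (lam / m) = (m : ℝ) / lam from one_div_div lam m] at hk
  rw [hphi n] at hk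
  have hterm : ∀ k : ℕ, dfall lam ((m : ℝ) * k) n * (α / m) ^ k / (Nat.factorial k)
      = (m : ℝ) ^ n * (dfall (lam / m) (k : ℝ) n * (α / m) ^ k / (Nat.factorial k)) := by
    intro k
    have hd : dfall lam ((m : ℝ) * k) n = (m : ℝ) ^ n * dfall (lam / m) (k : ℝ) n := by
      unfold dfall
      rw [← Finset.card_range n, ← Finset.prod_const ((m : ℝ)), Finset.card_range,
        ← Finset.prod_mul_distrib]
      apply Finset.prod_congr rfl
      intro i _
      field_simp
    rw [hd]
    ring
  rw [tsum_congr hterm, tsum_mul_left, ← mul_assoc, mul_comm (Real.exp (-(α / m))), mul_assoc,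
    ← hk]
end

section
/- For n, r ≥ 0, D^{(r)}_{m,λ}(n,α) = Σ_{j=0}^n C_j(1; -α/m) Σ_{k=j}^n C(n,k) (r-m)_{n-k,λ} S_{2,λ/m}(k,j) m^k. -/
open scoped ContDiff
open Finset

section infra
variable {s : Set ℝ} {f g : ℝ → ℝ}

lemma smooth_iter (hs : IsOpen s) (hf : ContDiffOn ℝ ∞ f s) (n : ℕ) :
    ContDiffOn ℝ ∞ (iteratedDeriv n f) s := by
  induction n with
  | zero => exact hf
  | succ n ih => rw [iteratedDeriv_succ]; exact ih.deriv_of_isOpen hs (le_refl _)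

lemma hasDerivAt_iter (hs : IsOpen s) (hf : ContDiffOn ℝ ∞ f s)
    (n : ℕ) {x : ℝ} (hx : x ∈ s) :
    HasDerivAt (iteratedDeriv n f) (iteratedDeriv (n + 1) f x) x := by
  have h1 : DifferentiableAt ℝ (iteratedDeriv n f) x := by
    have := (smooth_iter hs hf n).differentiableOn (by norm_num)
    exact this.differentiableAt (hs.mem_nhds hx)
  simpa [iteratedDeriv_succ] using h1.hasDerivAt

lemma deriv_congr_on (hs : IsOpen s) (h : Set.EqOn f g s) {x : ℝ} (hx : x ∈ s) :
    deriv f x = deriv g x :=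
  Filter.EventuallyEq.deriv_eq (Filter.eventuallyEq_of_mem (hs.mem_nhds hx) h)

lemma pascal_sum (A B : ℕ → ℝ) (n : ℕ) :
    ∑ k ∈ range (n+1), (n.choose k : ℝ) * (A (k+1) * B (n-k) + A k * B (n-k+1))
    = ∑ k ∈ range (n+2), ((n+1).choose k : ℝ) * A k * B (n+1-k) := by
  rw [Finset.sum_range_succ' (fun k => ((n+1).choose k : ℝ) * A k * B (n+1-k)) (n+1)]
  have h1 : ∀ k, k ∈ range (n+1) → ((n+1).choose (k+1) : ℝ) * A (k+1) * B (n+1-(k+1))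
      = (n.choose k : ℝ) * A (k+1) * B (n-k) + (n.choose (k+1) : ℝ) * A (k+1) * B (n-k) := by
    intro k hk
    have : (n+1).choose (k+1) = n.choose k + n.choose (k+1) := Nat.choose_succ_succ n k
    rw [this]; push_cast; ring_nf
  rw [Finset.sum_congr rfl h1, Finset.sum_add_distrib]
  have h2 : ∑ k ∈ range (n+1), (n.choose (k+1) : ℝ) * A (k+1) * B (n-k)
      = ∑ k ∈ range n, (n.choose (k+1) : ℝ) * A (k+1) * B (n-k) := by
    rw [Finset.sum_range_succ]; simp
  have h3 : ∑ k ∈ range (n+1), (n.choose k : ℝ) * (A k * B (n-k+1))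
      = ∑ k ∈ range n, (n.choose (k+1) : ℝ) * A (k+1) * B (n-(k+1)+1) + (n.choose 0 : ℝ) * (A 0 * B (n+1)) := by
    rw [Finset.sum_range_succ' (fun k => (n.choose k : ℝ) * (A k * B (n-k+1))) n]
    simp [mul_assoc]
  have h4 : ∀ k ∈ range n, (n.choose (k+1) : ℝ) * A (k+1) * B (n-(k+1)+1)
      = (n.choose (k+1) : ℝ) * A (k+1) * B (n-k) := by
    intro k hk
    simp only [mem_range] at hk
    congr 2
    omega
  simp only [mul_add, Finset.sum_add_distrib]
  rw [h2, h3, Finset.sum_congr rfl h4]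
  simp [mul_assoc]
  ring

lemma leibniz (hs : IsOpen s) (hf : ContDiffOn ℝ ∞ f s)
    (hg : ContDiffOn ℝ ∞ g s) (n : ℕ) {x : ℝ} (hx : x ∈ s) :
    iteratedDeriv n (fun t => f t * g t) x =
      ∑ k ∈ range (n + 1), (n.choose k : ℝ) * iteratedDeriv k f x * iteratedDeriv (n - k) g x := by
  induction n generalizing x with
  | zero => simp
  | succ n ih =>
    rw [iteratedDeriv_succ]
    have hloc : Set.EqOn (iteratedDeriv n fun t => f t * g t)
        (fun y => ∑ k ∈ range (n + 1), (n.choose k : ℝ) * iteratedDeriv k f y * iteratedDeriv (n - k) g y) s :=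
      fun y hy => ih hy
    have hd : HasDerivAt (fun y => ∑ k ∈ range (n + 1), (n.choose k : ℝ) * iteratedDeriv k f y * iteratedDeriv (n - k) g y)
        (∑ k ∈ range (n + 1), (n.choose k : ℝ) * (iteratedDeriv (k+1) f x * iteratedDeriv (n - k) g x
          + iteratedDeriv k f x * iteratedDeriv (n - k + 1) g x)) x := by
      apply HasDerivAt.fun_sum
      intro k hk
      have h1 := (hasDerivAt_iter hs hf k hx).mul (hasDerivAt_iter hs hg (n - k) hx)
      simpa [mul_add, mul_comm, mul_left_comm, mul_assoc] using h1.const_mul ((n.choose k : ℝ))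
    rw [deriv_congr_on hs hloc hx, hd.deriv]
    exact pascal_sum (fun k => iteratedDeriv k f x) (fun k => iteratedDeriv k g x) n

lemma iter_cmul (hs : IsOpen s) (hf : ContDiffOn ℝ ∞ f s) (c : ℝ) (n : ℕ)
    {x : ℝ} (hx : x ∈ s) :
    iteratedDeriv n (fun t => c * f t) x = c * iteratedDeriv n f x := by
  induction n generalizing x with
  | zero => simp
  | succ n ih =>
    rw [iteratedDeriv_succ, iteratedDeriv_succ]
    have hloc : Set.EqOn (iteratedDeriv n fun t => c * f t)
        (fun y => c * iteratedDeriv n f y) s := fun y hy => ih hy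
    rw [deriv_congr_on hs hloc hx, ((hasDerivAt_iter hs hf n hx).const_mul c).deriv,
      (hasDerivAt_iter hs hf n hx).deriv]

lemma iter_sum (hs : IsOpen s) {ι : Type*} (F : Finset ι) (f : ι → ℝ → ℝ)
    (hf : ∀ j ∈ F, ContDiffOn ℝ ∞ (f j) s) (n : ℕ) {x : ℝ} (hx : x ∈ s) :
    iteratedDeriv n (fun t => ∑ j ∈ F, f j t) x = ∑ j ∈ F, iteratedDeriv n (f j) x := by
  induction n generalizing x with
  | zero => simp
  | succ n ih =>
    rw [iteratedDeriv_succ]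
    have hloc : Set.EqOn (iteratedDeriv n fun t => ∑ j ∈ F, f j t)
        (fun y => ∑ j ∈ F, iteratedDeriv n (f j) y) s := fun y hy => ih hy
    rw [deriv_congr_on hs hloc hx]
    have hd : HasDerivAt (fun y => ∑ j ∈ F, iteratedDeriv n (f j) y)
        (∑ j ∈ F, iteratedDeriv (n+1) (f j) x) x :=
      HasDerivAt.fun_sum (fun j hj => hasDerivAt_iter hs (hf j hj) n hx)
    rw [hd.deriv]

end infra


section pow
variable {lam : ℝ}

lemma s_open (lam : ℝ) : IsOpen {t : ℝ | 0 < 1 + lam * t} :=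
  isOpen_lt continuous_const (by continuity)

lemma s_mem0 (lam : ℝ) : (0:ℝ) ∈ {t : ℝ | 0 < 1 + lam * t} := by norm_num

lemma P_cd (c : ℝ) : ContDiffOn ℝ ∞ (fun t => (1 + lam * t) ^ c) {t : ℝ | 0 < 1 + lam * t} := by
  apply ContDiffOn.rpow_const_of_ne
  · exact (contDiff_const.add (contDiff_const.mul contDiff_id)).contDiffOn
  · intro x hx; exact ne_of_gt hx

lemma P_hasDeriv (c : ℝ) {x : ℝ} (hx : x ∈ {t : ℝ | 0 < 1 + lam * t}) :
    HasDerivAt (fun t => (1 + lam * t) ^ c) (c * lam * (1 + lam * x) ^ (c - 1)) x := by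
  have h : HasDerivAt (fun t : ℝ => 1 + lam * t) lam x := by
    simpa using ((hasDerivAt_id x).const_mul lam).const_add 1
  have := h.rpow_const (p := c) (Or.inl (ne_of_gt hx))
  convert this using 1
  ring

lemma iterP (c : ℝ) (n : ℕ) {x : ℝ} (hx : x ∈ {t : ℝ | 0 < 1 + lam * t}) :
    iteratedDeriv n (fun t => (1 + lam * t) ^ c) x
      = (∏ i ∈ range n, (c - i)) * lam ^ n * (1 + lam * x) ^ (c - n) := by
  induction n generalizing x with
  | zero => simp
  | succ n ih =>
    rw [iteratedDeriv_succ]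
    have hloc : Set.EqOn (iteratedDeriv n fun t => (1 + lam * t) ^ c)
        (fun y => (∏ i ∈ range n, (c - i)) * lam ^ n * (1 + lam * y) ^ (c - n))
        {t : ℝ | 0 < 1 + lam * t} := by
      intro y hy; rw [ih hy]
    rw [deriv_congr_on (s_open lam) hloc hx]
    have hd := (P_hasDeriv (c - n) hx).const_mul ((∏ i ∈ range n, (c - i)) * lam ^ n)
    rw [hd.deriv, prod_range_succ]
    push_cast
    ring_nf

end pow

lemma ffall_succ (x : ℝ) (j : ℕ) : ffall x (j+1) = ffall x j * (x - j) :=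
  Finset.prod_range_succ _ _

lemma ffall_zero_of_lt {p j : ℕ} (h : p < j) : ffall (p:ℝ) j = 0 :=
  Finset.prod_eq_zero (Finset.mem_range.mpr h) (by simp)

lemma ffall_nat (p j : ℕ) : ffall (p:ℝ) j = (p.choose j : ℝ) * (j.factorial : ℝ) := by
  induction j with
  | zero => simp [ffall]
  | succ j ih =>
    rw [ffall_succ, ih]
    rcases lt_or_ge j p with h | h
    · have hnat : p.choose (j+1) * (j+1) = p.choose j * (p - j) := Nat.choose_succ_right_eq p j
      have hcast : ((p - j : ℕ) : ℝ) = (p:ℝ) - j := by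
        rw [Nat.cast_sub h.le]
      have : (p.choose (j+1) : ℝ) * (j+1) = (p.choose j : ℝ) * ((p:ℝ) - j) := by
        rw [← hcast]; exact_mod_cast congrArg (Nat.cast : ℕ → ℝ) hnat
      have hfac : (((j+1).factorial : ℕ) : ℝ) = (j+1) * (j.factorial : ℝ) := by
        rw [Nat.factorial_succ]; push_cast; ring
      rw [hfac]
      nlinarith [this]
    · have h1 : (p.choose (j+1) : ℝ) = 0 := by
        rw [Nat.choose_eq_zero_of_lt (by omega)]; simp
      rw [h1, zero_mul]
      rcases eq_or_lt_of_le h with h2 | h2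
      · subst h2; simp
      · simp [Nat.choose_eq_zero_of_lt h2]

lemma ffall_unique (K : ℕ) (c : ℕ → ℝ)
    (h : ∀ p : ℕ, p ≤ K → ∑ j ∈ Finset.range (K+1), c j * ffall p j = 0) :
    ∀ j, j ≤ K → c j = 0 := by
  intro j
  induction j using Nat.strong_induction_on with
  | _ j ih =>
    intro hj
    have h0 := h j hj
    have hsingle : ∑ j' ∈ Finset.range (K+1), c j' * ffall j j' = c j * ffall j j := by
      apply Finset.sum_eq_single
      · intro j' hj' hne
        rcases lt_or_gt_of_ne hne with hlt | hgt
        · rw [ih j' hlt (by omega), zero_mul]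
        · rw [ffall_zero_of_lt hgt, mul_zero]
      · intro habs
        exact absurd (Finset.mem_range.mpr (by omega)) habs
    rw [hsingle] at h0
    have : ffall (j:ℝ) j ≠ 0 := by
      rw [ffall_nat, Nat.choose_self]
      simp only [Nat.cast_one, one_mul]
      exact_mod_cast j.factorial_ne_zero
    exact (mul_eq_zero.mp h0).resolve_right this

lemma dfall_eq_prod {lam : ℝ} (hlam : lam ≠ 0) (e : ℝ) (n : ℕ) :
    dfall lam e n = (∏ i ∈ Finset.range n, (e/lam - i)) * lam ^ n := by
  rw [dfall]
  have h : ∀ i ∈ Finset.range n, (e - i * lam) = (e/lam - i) * lam := by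
    intro i _; field_simp
  rw [Finset.prod_congr rfl h, Finset.prod_mul_distrib, Finset.prod_const, Finset.card_range]

lemma dfall_scale {mu : ℝ} (hmu : mu ≠ 0) (lam x : ℝ) (k : ℕ) :
    dfall lam (mu * x) k = mu ^ k * dfall (lam / mu) x k := by
  rw [dfall, dfall]
  have h : ∀ i ∈ Finset.range k, (mu * x - i * lam) = mu * (x - i * (lam/mu)) := by
    intro i _; field_simp
  rw [Finset.prod_congr rfl h, Finset.prod_mul_distrib, Finset.prod_const, Finset.card_range]

lemma iter_add {s : Set ℝ} {f g : ℝ → ℝ} (hs : IsOpen s) (hf : ContDiffOn ℝ ∞ f s)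
    (hg : ContDiffOn ℝ ∞ g s) (n : ℕ) {x : ℝ} (hx : x ∈ s) :
    iteratedDeriv n (fun t => f t + g t) x = iteratedDeriv n f x + iteratedDeriv n g x := by
  induction n generalizing x with
  | zero => simp
  | succ n ih =>
    rw [iteratedDeriv_succ, iteratedDeriv_succ, iteratedDeriv_succ]
    have hloc : Set.EqOn (iteratedDeriv n fun t => f t + g t)
        (fun y => iteratedDeriv n f y + iteratedDeriv n g y) s := fun y hy => ih hy
    rw [deriv_congr_on hs hloc hx,
      (show HasDerivAt (fun y => iteratedDeriv n f y + iteratedDeriv n g y) _ x from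
        (hasDerivAt_iter hs hf n hx).add (hasDerivAt_iter hs hg n hx)).deriv,
      (hasDerivAt_iter hs hf n hx).deriv, (hasDerivAt_iter hs hg n hx).deriv]

lemma iterP0 {lam : ℝ} (hlam : lam ≠ 0) (e : ℝ) (n : ℕ) :
    iteratedDeriv n (fun t => (1 + lam * t) ^ (e / lam)) 0 = dfall lam e n := by
  rw [iterP (e / lam) n (s_mem0 lam), dfall_eq_prod hlam]
  norm_num [Real.one_rpow]

lemma iter_zero (k : ℕ) (x : ℝ) : iteratedDeriv k (fun _ : ℝ => (0:ℝ)) x = 0 := by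
  induction k generalizing x with
  | zero => simp
  | succ k ih => rw [iteratedDeriv_succ']; simp only [deriv_const']; exact ih x

lemma iter_const (c : ℝ) (k : ℕ) (x : ℝ) :
    iteratedDeriv k (fun _ : ℝ => c) x = if k = 0 then c else 0 := by
  match k with
  | 0 => simp
  | (k+1) => rw [iteratedDeriv_succ']; simp only [deriv_const']; rw [iter_zero]; simp

lemma iter_exp (a : ℝ) (k : ℕ) (x : ℝ) :
    iteratedDeriv k (fun t : ℝ => Real.exp (a * t)) x = a ^ k * Real.exp (a * x) := by
  induction k generalizing x with
  | zero => simp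
  | succ k ih =>
    rw [iteratedDeriv_succ']
    have hder : deriv (fun t : ℝ => Real.exp (a * t)) = fun t : ℝ => a * Real.exp (a * t) := by
      funext y
      have H : HasDerivAt (fun t : ℝ => Real.exp (a * t)) (a * Real.exp (a * y)) y := by
        have := (((hasDerivAt_id y).const_mul a).exp)
        simpa [mul_comm] using this
      rw [H.deriv]
    have hcd : ContDiffOn ℝ ∞ (fun t : ℝ => Real.exp (a * t)) Set.univ :=
      (Real.contDiff_exp.comp (contDiff_const.mul contDiff_id)).contDiffOn
    rw [hder, iter_cmul isOpen_univ hcd a k (Set.mem_univ x), ih]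
    ring

lemma iter_lin (k : ℕ) (x : ℝ) :
    iteratedDeriv k (fun t : ℝ => 1 + t) x = if k = 0 then 1 + x else if k = 1 then 1 else 0 := by
  match k with
  | 0 => simp
  | (k+1) =>
    rw [iteratedDeriv_succ']
    have hder : deriv (fun t : ℝ => 1 + t) = fun _ : ℝ => (1:ℝ) := by
      funext y
      have H : HasDerivAt (fun t : ℝ => 1 + t) 1 y := by
        simpa using ((hasDerivAt_id y).const_add 1)
      rw [H.deriv]
    rw [hder, iter_const]
    rcases Nat.eq_zero_or_pos k with h | h <;> simp [h]

lemma C_val (a : ℝ) (k : ℕ) :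
    iteratedDeriv k (fun t : ℝ => Real.exp (a * t) * (1 + t) ^ (1:ℝ)) 0
      = a ^ k + k * a ^ (k - 1) := by
  have hfun : (fun t : ℝ => Real.exp (a * t) * (1 + t) ^ (1:ℝ))
      = fun t : ℝ => Real.exp (a * t) * (1 + t) := by
    funext t; rw [Real.rpow_one]
  rw [hfun]
  have hcd1 : ContDiffOn ℝ ∞ (fun t : ℝ => Real.exp (a * t)) Set.univ :=
    (Real.contDiff_exp.comp (contDiff_const.mul contDiff_id)).contDiffOn
  have hcd2 : ContDiffOn ℝ ∞ (fun t : ℝ => 1 + t) Set.univ :=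
    (contDiff_const.add contDiff_id).contDiffOn
  rw [leibniz isOpen_univ hcd1 hcd2 k (Set.mem_univ 0)]
  simp only [iter_exp, iter_lin, mul_zero, add_zero, Real.exp_zero, mul_one]
  match k with
  | 0 => simp
  | (k+1) =>
    rw [Finset.sum_range_succ, Finset.sum_range_succ]
    have hz : ∑ i ∈ Finset.range k, (((k+1).choose i : ℝ) * a ^ i
        * (if k + 1 - i = 0 then 1 else if k + 1 - i = 1 then 1 else 0)) = 0 := by
      apply Finset.sum_eq_zero
      intro i hi
      simp only [Finset.mem_range] at hi
      rw [if_neg (by omega), if_neg (by omega), mul_zero]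
    rw [hz]
    rw [show k + 1 - k = 1 by omega]
    norm_num [Nat.choose_succ_self_right]
    ring

theorem stmt13 (m : ℕ) (hm : 0 < m) (r : ℕ) (α lam : ℝ) (hlam : lam ≠ 0)
    (D : ℕ → ℝ)
    (hD : ∀ n : ℕ, iteratedDeriv n
        (fun t : ℝ => (1 + lam * t) ^ ((r : ℝ) / lam) *
          Real.exp ((α / m) * ((1 + lam * t) ^ ((m : ℝ) / lam) - 1))) 0 = D n)
    (C : ℕ → ℝ)
    (hC : ∀ k : ℕ, iteratedDeriv k
        (fun t : ℝ => Real.exp ((α / m) * t) * (1 + t) ^ (1 : ℝ)) 0 = C k)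
    (S : ℕ → ℕ → ℝ)
    (hS : ∀ (x : ℝ) (N : ℕ),
      dfall (lam / m) x N = ∑ k ∈ Finset.range (N + 1), S N k * ffall x k)
    (n : ℕ) :
    D n = ∑ j ∈ Finset.range (n + 1), C j *
        ∑ k ∈ Finset.Icc j n,
          (n.choose k : ℝ) * dfall lam ((r : ℝ) - m) (n - k) * S k j * (m : ℝ) ^ k := by
  have hm' : ((m : ℕ) : ℝ) ≠ 0 := Nat.cast_ne_zero.mpr hm.ne'
  have hs : IsOpen {t : ℝ | 0 < 1 + lam * t} := s_open lam
  have h0 : (0:ℝ) ∈ {t : ℝ | 0 < 1 + lam * t} := s_mem0 lam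
  set s : Set ℝ := {t : ℝ | 0 < 1 + lam * t} with hsdef
  set a : ℝ := α / m with ha
  set W : ℝ → ℝ := (fun t => (1 + lam * t) ^ ((m : ℝ) / lam)) with hWdef
  set U : ℝ → ℝ := (fun t => W t - 1) with hUdef
  set EE : ℝ → ℝ := (fun t => Real.exp (a * (W t - 1))) with hEEdef
  set Q : ℝ → ℝ := (fun t => (1 + lam * t) ^ (((m : ℝ) - lam) / lam)) with hQdef
  set G : ℝ → ℝ := (fun t => (1 + lam * t) ^ (((r : ℝ) - m) / lam)) with hGdef
  set V : ℕ → ℝ → ℝ := (fun j t => U t ^ j / (j.factorial : ℝ)) with hVdef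
  -- smoothness
  have hWs : ContDiffOn ℝ ∞ W s := by rw [hWdef]; exact P_cd _
  have hQs : ContDiffOn ℝ ∞ Q s := by rw [hQdef]; exact P_cd _
  have hGs : ContDiffOn ℝ ∞ G s := by rw [hGdef]; exact P_cd _
  have hUs : ContDiffOn ℝ ∞ U s := by rw [hUdef]; exact hWs.sub contDiffOn_const
  have hEEs : ContDiffOn ℝ ∞ EE s := by
    rw [hEEdef]; exact (contDiffOn_const.mul (hWs.sub contDiffOn_const)).exp
  have hVs : ∀ j, ContDiffOn ℝ ∞ (V j) s := by
    intro j; rw [hVdef]; exact (hUs.pow j).div_const _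
  -- values at 0
  have hW0 : W 0 = 1 := by rw [hWdef]; norm_num
  have hU0 : U 0 = 0 := by rw [hUdef]; simp [hW0]
  have hEE0 : EE 0 = 1 := by rw [hEEdef]; simp [hW0]
  -- m * q_i = u_{i+1}
  have hq : ∀ i : ℕ, (m : ℝ) * iteratedDeriv i Q 0 = dfall lam (m : ℝ) (i + 1) := by
    intro i
    rw [hQdef, iterP0 hlam ((m : ℝ) - lam) i]
    rw [dfall, dfall, Finset.prod_range_succ']
    have hcongr : ∀ j ∈ Finset.range i, ((m:ℝ) - (↑(j+1)) * lam) = ((m:ℝ) - lam) - ↑j * lam := by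
      intro j _; push_cast; ring
    rw [Finset.prod_congr rfl hcongr]
    push_cast; ring
  -- derivative of W
  have hW' : ∀ x ∈ s, HasDerivAt W ((m : ℝ) * Q x) x := by
    intro x hx
    have h1 := P_hasDeriv (lam := lam) ((m : ℝ) / lam) hx
    rw [hWdef, hQdef]
    convert h1 using 1
    rw [show (m:ℝ)/lam - 1 = ((m:ℝ) - lam)/lam by field_simp]
    field_simp
  have hU' : ∀ x ∈ s, HasDerivAt U ((m : ℝ) * Q x) x := by
    intro x hx; rw [hUdef]; exact (hW' x hx).sub_const 1
  -- deriv EE on s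
  have hEEderiv : Set.EqOn (deriv EE) (fun t => (a * m) * (Q t * EE t)) s := by
    intro x hx
    have hE' : HasDerivAt EE (EE x * (a * ((m : ℝ) * Q x))) x := by
      rw [hEEdef]
      exact (((hW' x hx).sub_const 1).const_mul a).exp
    rw [hE'.deriv]; rw [hEEdef]; ring
  -- deriv V (j+1) on s
  have hVderiv : ∀ j : ℕ, Set.EqOn (deriv (V (j+1))) (fun t => (m:ℝ) * (Q t * V j t)) s := by
    intro j x hx
    have h1 : HasDerivAt (fun t => U t ^ (j+1)) ((((j:ℝ)+1)) * U x ^ j * ((m:ℝ) * Q x)) x := by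
      have := (hU' x hx).pow (j+1)
      rw [show (fun t => U t ^ (j+1)) = U ^ (j+1) from rfl]
      simpa using this
    have h2 : HasDerivAt (V (j+1))
        (((((j:ℝ)+1)) * U x ^ j * ((m:ℝ) * Q x)) / (((j+1).factorial : ℕ) : ℝ)) x := by
      rw [hVdef]
      exact h1.div_const _
    rw [h2.deriv, hVdef]
    have hfj : (((j+1).factorial : ℕ) : ℝ) = ((j:ℝ)+1) * (j.factorial : ℝ) := by
      rw [Nat.factorial_succ]; push_cast; ring
    rw [hfj]
    have hjne : ((j:ℝ)+1) ≠ 0 := by positivity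
    have hjfne : (j.factorial : ℝ) ≠ 0 := Nat.cast_ne_zero.mpr j.factorial_ne_zero
    field_simp
  -- ε recurrence
  have hεrec : ∀ k : ℕ, iteratedDeriv (k+1) EE 0
      = a * ∑ i ∈ Finset.range (k+1), (k.choose i : ℝ) * dfall lam (m:ℝ) (i+1) * iteratedDeriv (k-i) EE 0 := by
    intro k
    rw [iteratedDeriv_succ', (hEEderiv.iteratedDeriv_of_isOpen hs k) h0,
      iter_cmul hs (hQs.mul hEEs) (a * m) k h0, leibniz hs hQs hEEs k h0,
      Finset.mul_sum, Finset.mul_sum]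
    apply Finset.sum_congr rfl
    intro i _
    rw [← hq i]
    ring
  -- T recurrence
  have hTrec : ∀ k j : ℕ, iteratedDeriv (k+1) (V (j+1)) 0
      = ∑ i ∈ Finset.range (k+1), (k.choose i : ℝ) * dfall lam (m:ℝ) (i+1) * iteratedDeriv (k-i) (V j) 0 := by
    intro k j
    rw [iteratedDeriv_succ', ((hVderiv j).iteratedDeriv_of_isOpen hs k) h0,
      iter_cmul hs (hQs.mul (hVs j)) (m:ℝ) k h0, leibniz hs hQs (hVs j) k h0,
      Finset.mul_sum]
    apply Finset.sum_congr rfl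
    intro i _
    rw [← hq i]
    ring
  -- T k 0
  have hT0 : ∀ k : ℕ, iteratedDeriv k (V 0) 0 = if k = 0 then 1 else 0 := by
    intro k
    have hfun : V 0 = fun _ : ℝ => (1:ℝ) := by
      funext t; rw [hVdef]; simp
    rw [hfun, iter_const]
  -- T vanishing
  have hTvanish : ∀ k j : ℕ, k < j → iteratedDeriv k (V j) 0 = 0 := by
    intro k
    induction k using Nat.strong_induction_on with
    | _ k ih =>
      intro j hkj
      match k, j, hkj with
      | 0, (j+1), _ =>
        rw [iteratedDeriv_zero, hVdef]
        simp [hU0]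
      | (k+1), (j+1), hkj =>
        rw [hTrec k j]
        apply Finset.sum_eq_zero
        intro i _
        rw [ih (k-i) (by omega) j (by omega), mul_zero]
  -- ε values
  have hεval : ∀ k : ℕ, iteratedDeriv k EE 0
      = ∑ j ∈ Finset.range (k+1), a ^ j * iteratedDeriv k (V j) 0 := by
    intro k
    induction k using Nat.strong_induction_on with
    | _ k ih =>
      match k with
      | 0 =>
        rw [iteratedDeriv_zero, hEE0]
        rw [Finset.sum_range_one, iteratedDeriv_zero]
        rw [hVdef]
        simp
      | (k+1) =>
        rw [hεrec k]
        have hstep : ∀ i ∈ Finset.range (k+1), (k.choose i : ℝ) * dfall lam (m:ℝ) (i+1) * iteratedDeriv (k-i) EE 0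
            = ∑ j ∈ Finset.range (k+1), (k.choose i : ℝ) * dfall lam (m:ℝ) (i+1) * (a ^ j * iteratedDeriv (k-i) (V j) 0) := by
          intro i hi
          rw [ih (k-i) (by simp at hi; omega)]
          have hext : ∑ j ∈ Finset.range (k-i+1), a ^ j * iteratedDeriv (k-i) (V j) 0
              = ∑ j ∈ Finset.range (k+1), a ^ j * iteratedDeriv (k-i) (V j) 0 := by
            apply Finset.sum_subset (Finset.range_subset_range.mpr (by omega))
            intro j hj hjn
            simp only [Finset.mem_range] at hj hjn
            rw [hTvanish (k-i) j (by omega), mul_zero]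
          rw [hext, Finset.mul_sum]
        rw [Finset.sum_congr rfl hstep]
        rw [Finset.sum_comm, Finset.mul_sum]
        rw [Finset.sum_range_succ' (fun j => a ^ j * iteratedDeriv (k+1) (V j) 0) (k+1)]
        rw [hT0 (k+1)]
        simp only [if_neg (Nat.succ_ne_zero k), mul_zero, add_zero]
        apply Finset.sum_congr rfl
        intro j _
        rw [hTrec k j, Finset.mul_sum, Finset.mul_sum]
        apply Finset.sum_congr rfl
        intro i _
        ring
  -- dagger
  have hdagger : ∀ k j : ℕ, iteratedDeriv k (fun t => U t * V j t) 0
      = ((j:ℝ)+1) * iteratedDeriv k (V (j+1)) 0 := by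
    intro k j
    have hfun2 : (fun t => U t * V j t) = fun t => ((j:ℝ)+1) * V (j+1) t := by
      funext t
      rw [hVdef]
      simp only
      rw [Nat.factorial_succ]
      have hjfne : (j.factorial : ℝ) ≠ 0 := Nat.cast_ne_zero.mpr j.factorial_ne_zero
      push_cast
      field_simp
      ring
    rw [hfun2, iter_cmul hs (hVs (j+1)) _ k h0]
  -- Phi
  have hΦ : ∀ k : ℕ, iteratedDeriv k (fun t => U t * EE t) 0
      = ∑ j ∈ Finset.range (k+1), (j:ℝ) * a ^ (j-1) * iteratedDeriv k (V j) 0 := by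
    intro k
    rw [leibniz hs hUs hEEs k h0]
    have hstep : ∀ i ∈ Finset.range (k+1), (k.choose i : ℝ) * iteratedDeriv i U 0 * iteratedDeriv (k-i) EE 0
        = ∑ j ∈ Finset.range (k+1), (k.choose i : ℝ) * iteratedDeriv i U 0 * (a ^ j * iteratedDeriv (k-i) (V j) 0) := by
      intro i hi
      rw [hεval (k-i)]
      have hext : ∑ j ∈ Finset.range (k-i+1), a ^ j * iteratedDeriv (k-i) (V j) 0
          = ∑ j ∈ Finset.range (k+1), a ^ j * iteratedDeriv (k-i) (V j) 0 := by
        apply Finset.sum_subset (Finset.range_subset_range.mpr (by simp at hi; omega))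
        intro j hj hjn
        simp only [Finset.mem_range] at hj hjn
        rw [hTvanish (k-i) j (by omega), mul_zero]
      rw [hext, Finset.mul_sum]
    rw [Finset.sum_congr rfl hstep, Finset.sum_comm]
    have hinner : ∀ j ∈ Finset.range (k+1),
        ∑ i ∈ Finset.range (k+1), (k.choose i : ℝ) * iteratedDeriv i U 0 * (a ^ j * iteratedDeriv (k-i) (V j) 0)
        = a ^ j * (((j:ℝ)+1) * iteratedDeriv k (V (j+1)) 0) := by
      intro j _
      rw [← hdagger k j, leibniz hs hUs (hVs j) k h0, Finset.mul_sum]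
      apply Finset.sum_congr rfl
      intro i _
      ring
    rw [Finset.sum_congr rfl hinner]
    rw [Finset.sum_range_succ' (fun j => (j:ℝ) * a ^ (j-1) * iteratedDeriv k (V j) 0) k]
    simp only [Nat.cast_zero, zero_mul, mul_zero, add_zero]
    rw [Finset.sum_range_succ]
    rw [hTvanish k (k+1) (by omega)]
    simp only [mul_zero, add_zero]
    apply Finset.sum_congr rfl
    intro j _
    push_cast
    ring_nf
  -- psi
  have hψ : ∀ k : ℕ, iteratedDeriv k (fun t => W t * EE t) 0
      = ∑ j ∈ Finset.range (k+1), C j * iteratedDeriv k (V j) 0 := by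
    intro k
    have hfun3 : (fun t => W t * EE t) = fun t => U t * EE t + EE t := by
      funext t; rw [hUdef]; simp only; ring
    rw [hfun3, iter_add hs (hUs.mul hEEs) hEEs k h0, hΦ k, hεval k,
      ← Finset.sum_add_distrib]
    apply Finset.sum_congr rfl
    intro j _
    have hCj : C j = a ^ j + (j:ℝ) * a ^ (j-1) := by
      rw [← hC j]
      exact C_val a j
    rw [hCj]
    ring
  -- D n via leibniz
  have hfeq : Set.EqOn (fun t : ℝ => (1 + lam * t) ^ ((r : ℝ) / lam) *
        Real.exp ((α / m) * ((1 + lam * t) ^ ((m : ℝ) / lam) - 1)))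
      (fun t => (W t * EE t) * G t) s := by
    intro t ht
    have hx : (0:ℝ) < 1 + lam * t := ht
    rw [hWdef, hEEdef, hGdef]
    simp only
    rw [show (r:ℝ)/lam = (m:ℝ)/lam + ((r:ℝ) - m)/lam by rw [← add_div]; ring_nf]
    rw [Real.rpow_add hx]
    ring
  have hDn : D n = ∑ k ∈ Finset.range (n+1), (n.choose k : ℝ)
      * iteratedDeriv k (fun t => W t * EE t) 0 * dfall lam ((r:ℝ) - m) (n-k) := by
    rw [← hD n, (hfeq.iteratedDeriv_of_isOpen hs n) h0,
      leibniz hs (hWs.mul hEEs) hGs n h0]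
    apply Finset.sum_congr rfl
    intro k _
    rw [hGdef, iterP0 hlam ((r:ℝ) - m) (n-k)]
  -- extraction: T k j = S k j * m^k for j ≤ k
  have hTS : ∀ k j : ℕ, j ≤ k → iteratedDeriv k (V j) 0 = S k j * (m:ℝ) ^ k := by
    intro k
    have key : ∀ p : ℕ, p ≤ k →
        ∑ j ∈ Finset.range (k+1), (iteratedDeriv k (V j) 0 - (m:ℝ)^k * S k j) * ffall (p:ℝ) j = 0 := by
      intro p hp
      have heqon : Set.EqOn (fun t => (1 + lam * t) ^ (((m:ℝ) * p) / lam))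
          (fun t => ∑ j ∈ Finset.range (p+1), ((p.choose j : ℝ) * (j.factorial : ℝ)) * V j t) s := by
        intro t ht
        have hx : (0:ℝ) < 1 + lam * t := ht
        simp only
        rw [show ((m:ℝ) * p) / lam = ((m:ℝ)/lam) * (p:ℝ) by ring]
        rw [Real.rpow_mul hx.le, Real.rpow_natCast]
        have e2 : (1 + lam * t) ^ ((m:ℝ)/lam) = U t + 1 := by
          rw [hUdef, hWdef]; simp
        rw [e2, add_pow]
        apply Finset.sum_congr rfl
        intro j _
        rw [hVdef]
        have hjfne : (j.factorial : ℝ) ≠ 0 := Nat.cast_ne_zero.mpr j.factorial_ne_zero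
        simp only [one_pow, mul_one]
        field_simp
      have hb : iteratedDeriv k (fun t => (1 + lam * t) ^ (((m:ℝ) * p) / lam)) 0
          = ∑ j ∈ Finset.range (p+1), ffall (p:ℝ) j * iteratedDeriv k (V j) 0 := by
        rw [(heqon.iteratedDeriv_of_isOpen hs k) h0,
          iter_sum hs (Finset.range (p+1)) _
            (fun j _ => contDiffOn_const.mul (hVs j)) k h0]
        apply Finset.sum_congr rfl
        intro j _
        rw [iter_cmul hs (hVs j) _ k h0, ffall_nat]
      have hap : iteratedDeriv k (fun t => (1 + lam * t) ^ (((m:ℝ) * p) / lam)) 0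
          = (m:ℝ)^k * ∑ j ∈ Finset.range (k+1), S k j * ffall (p:ℝ) j := by
        rw [iterP0 hlam ((m:ℝ) * p) k, dfall_scale hm' lam (p:ℝ) k, hS (p:ℝ) k]
      have hcomb := hb.symm.trans hap
      have hext : ∑ j ∈ Finset.range (p+1), ffall (p:ℝ) j * iteratedDeriv k (V j) 0
          = ∑ j ∈ Finset.range (k+1), ffall (p:ℝ) j * iteratedDeriv k (V j) 0 := by
        apply Finset.sum_subset (Finset.range_subset_range.mpr (by omega))
        intro j hj hjn
        simp only [Finset.mem_range] at hj hjn
        rw [ffall_zero_of_lt (by omega), zero_mul]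
      rw [hext] at hcomb
      have hsplit : ∑ j ∈ Finset.range (k+1), (iteratedDeriv k (V j) 0 - (m:ℝ)^k * S k j) * ffall (p:ℝ) j
          = (∑ j ∈ Finset.range (k+1), ffall (p:ℝ) j * iteratedDeriv k (V j) 0)
            - (m:ℝ)^k * ∑ j ∈ Finset.range (k+1), S k j * ffall (p:ℝ) j := by
        rw [Finset.mul_sum, ← Finset.sum_sub_distrib]
        apply Finset.sum_congr rfl
        intro j _
        ring
      rw [hsplit, hcomb]
      ring
    have huniq := ffall_unique k _ key
    intro j hj
    have h2 := huniq j hj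
    have h3 : iteratedDeriv k (V j) 0 = (m:ℝ)^k * S k j := by linarith
    rw [h3]; ring
  -- final assembly
  rw [hDn]
  have hψext : ∀ k ∈ Finset.range (n+1), iteratedDeriv k (fun t => W t * EE t) 0
      = ∑ j ∈ Finset.range (n+1), C j * iteratedDeriv k (V j) 0 := by
    intro k hk
    simp only [Finset.mem_range] at hk
    rw [hψ k]
    apply Finset.sum_subset (Finset.range_subset_range.mpr (by omega))
    intro j hj hjk
    simp only [Finset.mem_range] at hj hjk
    rw [hTvanish k j (by omega), mul_zero]
  have hstep2 : ∀ k ∈ Finset.range (n+1), (n.choose k : ℝ)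
      * iteratedDeriv k (fun t => W t * EE t) 0 * dfall lam ((r:ℝ) - m) (n-k)
      = ∑ j ∈ Finset.range (n+1), C j * ((n.choose k : ℝ) * dfall lam ((r:ℝ) - m) (n-k) * iteratedDeriv k (V j) 0) := by
    intro k hk
    rw [hψext k hk, Finset.mul_sum, Finset.sum_mul]
    apply Finset.sum_congr rfl
    intro j _
    ring
  rw [Finset.sum_congr rfl hstep2, Finset.sum_comm]
  apply Finset.sum_congr rfl
  intro j hj
  simp only [Finset.mem_range] at hj
  rw [← Finset.mul_sum]
  congr 1
  have hsub : Finset.Icc j n ⊆ Finset.range (n+1) := by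
    intro k hk
    simp only [Finset.mem_Icc] at hk
    simp only [Finset.mem_range]
    omega
  rw [← Finset.sum_subset hsub]
  · apply Finset.sum_congr rfl
    intro k hk
    simp only [Finset.mem_Icc] at hk
    rw [hTS k j hk.1]
    ring
  · intro k hk hki
    simp only [Finset.mem_range] at hk
    simp only [Finset.mem_Icc] at hki
    rw [hTvanish k j (by omega), mul_zero]
end
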